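/- Let G be a finite group. The number of pairs (x, y) ∈ G² such that x²y² is a cube (i.e., there exists z ∈ G with x²y² = z³) is divisible by |G|. -/

import Mathlib

open MulAction

/-- A finite group acting freely on a finite type: the group's cardinality divides
the type's cardinality. -/
lemma card_dvd_of_free {H α : Type*} [Group H] [Fintype H] [Fintype α] [MulAction H α]
    (hf : ∀ (h : H) (a : α), h • a = a → h = 1) :
    Fintype.card H ∣ Fintype.card α := by
  classical
  rw [Fintype.card_congr (MulAction.selfEquivSigmaOrbits H α), Fintype.card_sigma]
  apply Finset.dvd_sum
  intro ω _
  have h1 : stabilizer H (Quotient.out ω) = ⊥ := by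
    ext h
    simp only [mem_stabilizer_iff, Subgroup.mem_bot]
    constructor
    · exact fun hh => hf h _ hh
    · rintro rfl; exact one_smul _ _
  have h3 : Nat.card (stabilizer H (Quotient.out ω)) = 1 := by
    rw [h1]; exact Subgroup.card_bot
  have h4 : Fintype.card (stabilizer H (Quotient.out ω)) = 1 := by
    rw [← Nat.card_eq_fintype_card]; exact h3
  have h2 := MulAction.card_orbit_mul_card_stabilizer_eq_card_group H (Quotient.out ω)
  rw [h4, mul_one] at h2
  rw [h2]

/-- If a set in a group is closed under left multiplication by a subgroup, then the
cardinality of the subgroup divides the cardinality of the set. -/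
lemma card_subgroup_dvd_card_set {Γ : Type*} [Group Γ] [Fintype Γ] (H : Subgroup Γ)
    (s : Set Γ) (hs : ∀ h ∈ H, ∀ x ∈ s, h * x ∈ s) :
    Nat.card H ∣ Nat.card s := by
  classical
  letI : MulAction H s :=
    { smul := fun h x => ⟨(h : Γ) * (x : Γ), hs h h.2 x x.2⟩
      one_smul := fun x => by
        apply Subtype.ext
        show ((1 : H) : Γ) * (x : Γ) = x
        simp
      mul_smul := fun g h x => by
        apply Subtype.ext
        show ((g * h : H) : Γ) * (x : Γ) = (g : Γ) * ((h : Γ) * (x : Γ))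
        simp [mul_assoc] }
  have hfree : ∀ (h : H) (a : s), h • a = a → h = 1 := by
    intro h a ha
    have h1 : (h : Γ) * (a : Γ) = (a : Γ) := congrArg Subtype.val ha
    have h2 : (h : Γ) = 1 := by
      have := mul_right_cancel (b := (a : Γ)) (a := (h : Γ)) (c := 1) (by simpa using h1)
      exact this
    exact Subtype.ext h2
  simpa only [Nat.card_eq_fintype_card] using card_dvd_of_free hfree

private lemma conj_cube {G : Type*} [Group G] (a z : G) :
    (a * z * a⁻¹) ^ 3 = a * z ^ 3 * a⁻¹ := by
  simp [pow_succ, mul_assoc]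

theorem stmt_9 (G : Type*) [Group G] [Fintype G] :
    Nat.card G ∣ Nat.card {p : G × G // ∃ z : G, p.1 ^ 2 * p.2 ^ 2 = z ^ 3} := by
  classical
  set P : G → G → Prop := fun u g => ∃ z : G, u * (g⁻¹ * u * g) = z ^ 3 with hP
  -- Step 1: re-coordinatize pairs `(x, y)` as `(u, g) = (x*y, x)`
  have e1 : {p : G × G // ∃ z : G, p.1 ^ 2 * p.2 ^ 2 = z ^ 3} ≃ {p : G × G // P p.1 p.2} :=
    { toFun := fun q =>
        ⟨(q.1.1 * q.1.2, q.1.1), by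
          obtain ⟨z, hz⟩ := q.2
          refine ⟨q.1.1⁻¹ * z * (q.1.1⁻¹)⁻¹, ?_⟩
          rw [conj_cube, ← hz]
          simp [pow_succ, mul_assoc]⟩
      invFun := fun q =>
        ⟨(q.1.2, q.1.2⁻¹ * q.1.1), by
          obtain ⟨z, hz⟩ := q.2
          refine ⟨q.1.2 * z * q.1.2⁻¹, ?_⟩
          rw [conj_cube, ← hz]
          simp [pow_succ, mul_assoc]⟩
      left_inv := fun q => by
        apply Subtype.ext
        apply Prod.ext <;> simp
      right_inv := fun q => by
        apply Subtype.ext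
        apply Prod.ext <;> simp }
  rw [Nat.card_congr e1]
  -- Step 2: fiberwise count over `u`
  rw [Nat.card_congr (Equiv.subtypeProdEquivSigmaSubtype P)]
  simp only [Nat.card_eq_fintype_card]
  rw [Fintype.card_sigma]
  set c : G → ℕ := fun u => Fintype.card {g : G // P u g} with hc
  -- `c` is a class function
  have hconst : ∀ (w u : G), c (w * u * w⁻¹) = c u := by
    intro w u
    apply Fintype.card_congr
    refine
      { toFun := fun g => ⟨w⁻¹ * (g : G) * w, ?_⟩
        invFun := fun g => ⟨w * (g : G) * w⁻¹, ?_⟩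
        left_inv := fun g => by apply Subtype.ext; simp [mul_assoc]
        right_inv := fun g => by apply Subtype.ext; simp [mul_assoc] }
    · obtain ⟨z, hz⟩ := g.2
      refine ⟨w⁻¹ * z * (w⁻¹)⁻¹, ?_⟩
      rw [conj_cube, ← hz]
      simp [mul_assoc, mul_inv_rev]
    · obtain ⟨z, hz⟩ := g.2
      refine ⟨w * z * w⁻¹, ?_⟩
      rw [conj_cube, ← hz]
      simp [mul_assoc, mul_inv_rev]
  -- the centralizer of `u` divides `c u`
  have hcent : ∀ u : G, Nat.card (Subgroup.centralizer ({u} : Set G)) ∣ c u := by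
    intro u
    have key := card_subgroup_dvd_card_set (Subgroup.centralizer ({u} : Set G))
      {g : G | P u g} ?_
    · have e : c u = Nat.card {g : G | P u g} := by
        show Fintype.card {g // P u g} = _
        rw [← Nat.card_eq_fintype_card]; rfl
      rw [e]; exact key
    · intro h hh x hx
      obtain ⟨z, hz⟩ := hx
      have hcomm : u * h = h * u :=
        Subgroup.mem_centralizer_iff.mp hh u (Set.mem_singleton u)
      refine ⟨z, ?_⟩
      show u * ((h * x)⁻¹ * u * (h * x)) = z ^ 3
      have h2 : (h * x)⁻¹ * u * (h * x) = x⁻¹ * u * x := by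
        rw [mul_inv_rev]
        have : h⁻¹ * u * h = u := by
          rw [mul_assoc, hcomm, inv_mul_cancel_left]
        calc x⁻¹ * h⁻¹ * u * (h * x) = x⁻¹ * (h⁻¹ * u * h) * x := by
              simp [mul_assoc]
          _ = x⁻¹ * u * x := by rw [this]
      rw [h2]
      exact hz
  -- group the sum over conjugacy classes (orbits of the conjugation action)
  have hfib := Fintype.sum_fiberwise
    (fun u : G => Quotient.mk (orbitRel (ConjAct G) G) u) c
  rw [← hfib]
  apply Finset.dvd_sum
  intro ω _
  -- every element of the fiber is conjugate to `ω.out`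
  have hmem : ∀ (u : G), Quotient.mk (orbitRel (ConjAct G) G) u = ω ↔
      u ∈ orbit (ConjAct G) (Quotient.out ω) := by
    intro u
    rw [Quotient.mk_eq_iff_out]
    exact orbitRel_apply
  -- the inner sum is constant on the fiber
  have h1 : ∀ a : {u : G // Quotient.mk (orbitRel (ConjAct G) G) u = ω},
      c a.1 = c (Quotient.out ω) := by
    intro a
    obtain ⟨w, hw⟩ := (hmem a.1).mp a.2
    have hwc : (ConjAct.ofConjAct w) * Quotient.out ω * (ConjAct.ofConjAct w)⁻¹ = a.1 := by
      rw [← ConjAct.smul_def]; exact hw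
    rw [← hwc, hconst]
  have hsum : ∑ a : {u : G // Quotient.mk (orbitRel (ConjAct G) G) u = ω}, c a.1
      = Fintype.card {u : G // Quotient.mk (orbitRel (ConjAct G) G) u = ω}
        * c (Quotient.out ω) := by
    calc ∑ a : {u : G // Quotient.mk (orbitRel (ConjAct G) G) u = ω}, c a.1
        = ∑ _a : {u : G // Quotient.mk (orbitRel (ConjAct G) G) u = ω},
            c (Quotient.out ω) := Finset.sum_congr rfl (fun a _ => h1 a)
      _ = _ := by rw [Finset.sum_const, smul_eq_mul, Finset.card_univ]
  rw [hsum]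
  -- the fiber has the same size as the orbit
  have hcard : Fintype.card {u : G // Quotient.mk (orbitRel (ConjAct G) G) u = ω}
      = Fintype.card (orbit (ConjAct G) (Quotient.out ω)) :=
    Fintype.card_congr (Equiv.subtypeEquivRight hmem)
  -- the stabilizer of the conjugation action is the centralizer
  have hstab : Fintype.card (stabilizer (ConjAct G) (Quotient.out ω))
      = Nat.card (Subgroup.centralizer ({Quotient.out ω} : Set G)) := by
    rw [Nat.card_eq_fintype_card]
    apply Fintype.card_congr
    refine Equiv.subtypeEquiv ConjAct.ofConjAct.toEquiv (fun x => ?_)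
    rw [mem_stabilizer_iff, ConjAct.smul_def, Subgroup.mem_centralizer_iff]
    constructor
    · intro hx y hy
      rw [Set.mem_singleton_iff] at hy
      subst hy
      simp only [MulEquiv.toEquiv_eq_coe, EquivLike.coe_coe]
      exact (mul_inv_eq_iff_eq_mul.mp hx).symm
    · intro hx
      have h := hx (Quotient.out ω) (Set.mem_singleton _)
      simp only [MulEquiv.toEquiv_eq_coe, EquivLike.coe_coe] at h
      rw [mul_inv_eq_iff_eq_mul, h]
  -- orbit-stabilizer
  obtain ⟨k, hk⟩ := hcent (Quotient.out ω)
  have horb := MulAction.card_orbit_mul_card_stabilizer_eq_card_group (ConjAct G)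
    (Quotient.out ω)
  rw [hcard, hk, ← hstab]
  have heq : Fintype.card (orbit (ConjAct G) (Quotient.out ω))
        * (Fintype.card (stabilizer (ConjAct G) (Quotient.out ω)) * k)
      = Fintype.card G * k := calc Fintype.card (orbit (ConjAct G) (Quotient.out ω))
        * (Fintype.card (stabilizer (ConjAct G) (Quotient.out ω)) * k)
      = (Fintype.card (orbit (ConjAct G) (Quotient.out ω))
        * Fintype.card (stabilizer (ConjAct G) (Quotient.out ω))) * k := by ring
    _ = Fintype.card (ConjAct G) * k := by rw [horb]
    _ = Fintype.card G * k := by rw [ConjAct.card]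
  rw [heq]
  exact dvd_mul_right _ _
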